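/- arXiv:2209.07955 — 2 statements merged into one kernel-verified Lean document; each statement's English description precedes it below -/
import Mathlib

section
/- If a ≥ b ≥ c ≥ d are real numbers with a + b + c + d = 0 and ad = bc < 0, then a = b and c = d. -/
theorem stmt2 (a b c d : ℝ) (hab : a ≥ b) (hbc : b ≥ c) (hcd : c ≥ d)
    (hsum : a + b + c + d = 0) (hprod : a * d = b * c) (hneg : b * c < 0) :
    a = b ∧ c = d := by
  have hb : 0 < b := by nlinarith
  have hc : c < 0 := by nlinarith
  have h1 : a = b := by nlinarith [sq_nonneg (a-b), sq_nonneg (c-d), mul_nonneg (sub_nonneg.2 hab) (sub_nonneg.2 hcd)]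
  refine ⟨h1, by nlinarith⟩
end

section
/- Let λ₁ > λ₂ > 0 be real numbers. If x, y ≥ 0 satisfy the linear system ((3λ₁⁴λ₂² + 2λ₁²λ₂⁴ - 3λ₂⁶ - 6λ₁⁶)/(λ₁²λ₂⁴))·x + ((3λ₁²λ₂⁴ + 2λ₁⁴λ₂² - 3λ₁⁶ - 6λ₂⁶)/λ₂⁶)·y = (7/2)(λ₁² + λ₂²) + 3(λ₁² - λ₂²)² - 4(λ₁² + λ₂²)², together with the analogous equation ((2λ₁⁸ + λ₂⁸ + 2λ₁⁶λ₂² - λ₁⁴λ₂⁴)/(λ₁²λ₂⁴))·x + ((2λ₂⁸ + λ₁⁸ + 2λ₁²λ₂⁶ - λ₁⁴λ₂⁴)/λ₂⁶)·y = (2/5)(λ₁⁶ + λ₂⁶) + (22/5)(λ₁⁴λ₂² + λ₁²λ₂⁴) - (13/10)(λ₁⁴ + λ₂⁴) - 2λ₁²λ₂², and additionally ((3λ₁⁴ + 2λ₁²λ₂² - λ₂⁴)/λ₂²)·x + (λ₁²(3λ₂⁴ + 2λ₁²λ₂² - λ₁⁴)/λ₂⁴)·y = -(9/5)(λ₁⁶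 + λ₂⁶ + λ₁⁴λ₂² + λ₁²λ₂⁴) - (2/5)(λ₁⁴ + λ₂⁴) + λ₁²λ₂², then (λ₁² - λ₂²)³(λ₁² + λ₂²)³(λ₁⁴ - λ₁²λ₂² + λ₂⁴) = 0, which is impossible; hence no such x, y exist. -/
theorem stmt6 (l₁ l₂ : ℝ) (h12 : l₁ > l₂) (h2 : l₂ > 0) :
    ¬ ∃ x y : ℝ, 0 ≤ x ∧ 0 ≤ y ∧
      ((3*l₁^4*l₂^2 + 2*l₁^2*l₂^4 - 3*l₂^6 - 6*l₁^6) / (l₁^2*l₂^4)) * x +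
        ((3*l₁^2*l₂^4 + 2*l₁^4*l₂^2 - 3*l₁^6 - 6*l₂^6) / l₂^6) * y =
        (7/2)*(l₁^2 + l₂^2) + 3*(l₁^2 - l₂^2)^2 - 4*(l₁^2 + l₂^2)^2 ∧
      ((2*l₁^8 + l₂^8 + 2*l₁^6*l₂^2 - l₁^4*l₂^4) / (l₁^2*l₂^4)) * x +
        ((2*l₂^8 + l₁^8 + 2*l₁^2*l₂^6 - l₁^4*l₂^4) / l₂^6) * y =
        (2/5)*(l₁^6 + l₂^6) + (22/5)*(l₁^4*l₂^2 + l₁^2*l₂^4) - (13/10)*(l₁^4 + l₂^4) - 2*l₁^2*l₂^2 ∧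
      ((3*l₁^4 + 2*l₁^2*l₂^2 - l₂^4) / l₂^2) * x +
        (l₁^2*(3*l₂^4 + 2*l₁^2*l₂^2 - l₁^4) / l₂^4) * y =
        -(9/5)*(l₁^6 + l₂^6 + l₁^4*l₂^2 + l₁^2*l₂^4) - (2/5)*(l₁^4 + l₂^4) + l₁^2*l₂^2 := by
  rintro ⟨x, y, hx, hy, e1, e2, e3⟩
  have h1 : l₁ > 0 := lt_trans h2 h12
  have h1n : l₁ ≠ 0 := ne_of_gt h1
  have h2n : l₂ ≠ 0 := ne_of_gt h2
  have hd : l₁^2 - l₂^2 > 0 := by nlinarith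
  have hq : l₁^4 - l₁^2*l₂^2 + l₂^4 > 0 := by nlinarith [sq_nonneg (l₁^2 - l₂^2), mul_pos (mul_pos h1 h1) (mul_pos h2 h2)]
  have hpos : (0:ℝ) < 10 * l₁^4 * l₂^10 * (l₁^2 - l₂^2)^3 * (l₁^2 + l₂^2)^3 *
      (l₁^4 - l₁^2*l₂^2 + l₂^4) := by positivity
  have key : -10 * l₁^4 * l₂^10 * (l₁^2 - l₂^2)^3 * (l₁^2 + l₂^2)^3 *
      (l₁^4 - l₁^2*l₂^2 + l₂^4) = 0 := by
    field_simp at e1 e2 e3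
    linear_combination
      ((-5/2)*l₁^2*l₂^14 + (15/2)*l₁^6*l₂^10 + (-15/2)*l₁^10*l₂^6 + (5/2)*l₁^14*l₂^2) * l₂^2 * e1 +
      ((-3/10)*l₁^2*l₂^12 + (3/10)*l₁^4*l₂^10 + (3/5)*l₁^6*l₂^8 + (-3/5)*l₁^8*l₂^6 + (-3/10)*l₁^10*l₂^4 + (3/10)*l₁^12*l₂^2) * l₂^2 * e2 +
      (l₁^4*l₂^14 - l₁^6*l₂^12 - 2*l₁^8*l₂^10 + 2*l₁^10*l₂^8 + l₁^12*l₂^6 - l₁^14*l₂^4) * l₂^2 * e3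
  linarith
end
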